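/- Let N ≥ 1 and let G(s,x) = (σ(s), F(s_0, x)) on 𝒳 = (ℕ → Fin N) × (Fin N → Bool). For any initial Boolean state x, any target Boolean state x_B, any strategy prefix (s^1, …, s^{k_0}) ∈ (Fin N)^{k_0}, and any tail strategy t : ℕ → Fin N, there exist an integer n_0 with k_0 ≤ n_0 ≤ k_0 + N and a strategy s̃ : ℕ → Fin N agreeing with (s^1, …, s^{k_0}) on its first k_0 terms such that G^{n_0}(s̃, x) = (t, x_B). -/

import Mathlib

/-- Distance between two strategy sequences:
`dS s t = ∑_{k=0}^∞ |s_k - t_k| / N^(k+1)`. -/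
noncomputable def dS (N : ℕ) (s t : ℕ → Fin N) : ℝ :=
  ∑' k : ℕ, |((s k : ℕ) : ℝ) - ((t k : ℕ) : ℝ)| / (N : ℝ) ^ (k + 1)

/-- Hamming distance between two Boolean vectors. -/
noncomputable def dX (N : ℕ) (x y : Fin N → Bool) : ℝ :=
  ((Finset.univ.filter (fun j => x j ≠ y j)).card : ℝ)

/-- Distance on the phase space `𝒳 = (ℕ → Fin N) × (Fin N → Bool)`. -/
noncomputable def dE (N : ℕ) (p q : (ℕ → Fin N) × (Fin N → Bool)) : ℝ :=
  dS N p.1 q.1 + dX N p.2 q.2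

/-- Negate exactly the `k`-th coordinate of the Boolean vector `x`. -/
def Fflip (N : ℕ) (k : Fin N) (x : Fin N → Bool) : Fin N → Bool :=
  fun j => if j = k then !(x j) else x j

/-- The chaotic-iterations map `G (s, x) = (σ s, F (s 0, x))`. -/
def G (N : ℕ) (p : (ℕ → Fin N) × (Fin N → Bool)) : (ℕ → Fin N) × (Fin N → Bool) :=
  (fun n => p.1 (n + 1), Fflip N (p.1 0) p.2)

/-- Apply a list of flips in order. -/
def applyL (N : ℕ) (L : List (Fin N)) (x : Fin N → Bool) : Fin N → Bool :=
  L.foldl (fun y k => Fflip N k y) x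

lemma applyL_nil (N : ℕ) (x : Fin N → Bool) : applyL N [] x = x := rfl

lemma applyL_cons (N : ℕ) (a : Fin N) (L : List (Fin N)) (x : Fin N → Bool) :
    applyL N (a :: L) x = applyL N L (Fflip N a x) := rfl

lemma applyL_append (N : ℕ) (L₁ L₂ : List (Fin N)) (x : Fin N → Bool) :
    applyL N (L₁ ++ L₂) x = applyL N L₂ (applyL N L₁ x) :=
  List.foldl_append

lemma iterG (N : ℕ) : ∀ (n : ℕ) (s : ℕ → Fin N) (x : Fin N → Bool),
    (G N)^[n] (s, x) =
      (fun m => s (m + n), applyL N (List.ofFn (fun i : Fin n => s i)) x) := by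
  intro n
  induction n with
  | zero => intro s x; simp [applyL]
  | succ n ih =>
    intro s x
    rw [Function.iterate_succ_apply]
    have : G N (s, x) = (fun m => s (m + 1), Fflip N (s 0) x) := rfl
    rw [this, ih]
    have hl : List.ofFn (fun i : Fin (n + 1) => s i) =
        s 0 :: List.ofFn (fun i : Fin n => s (i + 1)) := by
      rw [List.ofFn_succ]; rfl
    rw [hl, applyL_cons]
    simp only [Prod.mk.injEq]
    refine ⟨?_, trivial⟩
    funext m
    simp [add_assoc]

lemma applyL_nodup (N : ℕ) : ∀ (L : List (Fin N)), L.Nodup →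
    ∀ (x : Fin N → Bool) (j : Fin N),
      applyL N L x j = if j ∈ L then !(x j) else x j := by
  intro L
  induction L with
  | nil => intro _ x j; simp [applyL]
  | cons a L ih =>
    intro hnd x j
    rw [applyL_cons, ih (List.Nodup.of_cons hnd)]
    have ha : a ∉ L := (List.nodup_cons.mp hnd).1
    by_cases hjL : j ∈ L
    · have hja : j ≠ a := fun h => ha (h ▸ hjL)
      simp [hjL, Fflip, hja, List.mem_cons, hjL]
    · by_cases hja : j = a
      · subst hja
        simp [hjL, Fflip]
      · simp [hjL, Fflip, hja, List.mem_cons]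

theorem stmt15 (N : ℕ) (hN : 1 ≤ N) (x xB : Fin N → Bool)
    (k₀ : ℕ) (pre : Fin k₀ → Fin N) (t : ℕ → Fin N) :
    ∃ n₀ : ℕ, k₀ ≤ n₀ ∧ n₀ ≤ k₀ + N ∧
      ∃ s' : ℕ → Fin N, (∀ i : Fin k₀, s' i = pre i) ∧
        (G N)^[n₀] (s', x) = (t, xB) := by
  set P : List (Fin N) := List.ofFn pre with hP
  set x' : Fin N → Bool := applyL N P x with hx'
  set D : Finset (Fin N) := Finset.univ.filter (fun j => x' j ≠ xB j) with hD
  set L : List (Fin N) := P ++ D.toList with hL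
  have hPlen : P.length = k₀ := by simp [hP]
  have hLlen : L.length = k₀ + D.card := by simp [hL, hPlen]
  refine ⟨L.length, ?_, ?_, ?_⟩
  · rw [hLlen]; exact Nat.le_add_right _ _
  · rw [hLlen]
    exact Nat.add_le_add_left (le_trans (Finset.card_filter_le _ _) (by simp)) _
  · set s' : ℕ → Fin N := fun n =>
      if h : n < L.length then L.get ⟨n, h⟩ else t (n - L.length) with hs'
    have hget : ∀ (n : ℕ) (h : n < L.length), s' n = L.get ⟨n, h⟩ := by
      intro n h; simp [hs', h]
    refine ⟨s', ?_, ?_⟩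
    · intro i
      have hi : (i : ℕ) < L.length := by
        rw [hLlen]; exact lt_of_lt_of_le i.isLt (Nat.le_add_right _ _)
      rw [hget i hi]
      have : L.get ⟨i, hi⟩ = P.get ⟨i, by rw [hPlen]; exact i.isLt⟩ :=
        List.getElem_append_left (by rw [hPlen]; exact i.isLt)
      rw [this]
      simp [hP]
    · rw [iterG]
      have hofn : List.ofFn (fun i : Fin L.length => s' i) = L := by
        have : (fun i : Fin L.length => s' i) = L.get := by
          funext i; exact hget i i.isLt
        rw [this, List.ofFn_get]
      rw [hofn]
      simp only [Prod.mk.injEq]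
      constructor
      · funext m
        simp [hs', Nat.add_sub_cancel]
      · rw [hL, applyL_append, ← hx']
        funext j
        rw [applyL_nodup N D.toList D.nodup_toList]
        by_cases hj : x' j = xB j
        · have : j ∉ D.toList := by simp [Finset.mem_toList, hD, hj]
          simp [this, hj]
        · have : j ∈ D.toList := by simp [Finset.mem_toList, hD, hj]
          simp [this]
          cases h1 : x' j <;> cases h2 : xB j <;> simp_all
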